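/- For the transitive percolation dynamics with parameter p (and q = 1 - p), the product of transition probabilities along any natural labeling of a finite poset C with n elements equals p^L * q^(C(n,2) - R), where L is the number of links (covering relations) of C and R is the total number of relations of C; in particular this product is independent of the labeling. -/

import Mathlib

open Finset

variable {α : Type*} [Fintype α] [PartialOrder α] [DecidableEq α]
  [DecidableRel ((· ≤ ·) : α → α → Prop)]

/-- The strict past of an element `x`. -/
def past (x : α) : Finset α := Finset.univ.filter (fun y => y ≤ x ∧ y ≠ x)

/-- `varpi x = |past x|`. -/
def varpi (x : α) : ℕ := (past x).card

/-- `mpast x` is the number of maximal elements of `past x`, i.e. the number of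
elements covered by `x` (past links of `x`). -/
def mpast (x : α) : ℕ :=
  ((past x).filter (fun y => ∀ z ∈ past x, y ≤ z → z ≤ y)).card

/-- The number of links (covering relations) of the poset `α`. -/
def numLinks (α : Type*) [Fintype α] [PartialOrder α] [DecidableEq α]
    [DecidableRel ((· ≤ ·) : α → α → Prop)] : ℕ :=
  (Finset.univ.filter (fun z : α × α =>
    (z.1 ≤ z.2 ∧ z.1 ≠ z.2) ∧ ∀ w, (z.1 ≤ w ∧ z.1 ≠ w) → (w ≤ z.2 ∧ w ≠ z.2) → False)).card

/-- The number of relations of the poset `α`. -/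
def numRels (α : Type*) [Fintype α] [PartialOrder α] [DecidableEq α]
    [DecidableRel ((· ≤ ·) : α → α → Prop)] : ℕ :=
  (Finset.univ.filter (fun z : α × α => z.1 ≤ z.2 ∧ z.1 ≠ z.2)).card


lemma varpi_le (ℓ : α ≃ Fin (Fintype.card α))
    (hℓ : ∀ x y : α, x < y → (ℓ x : ℕ) < (ℓ y : ℕ)) (x : α) :
    varpi x ≤ (ℓ x : ℕ) := by
  have : varpi x ≤ (Finset.range (ℓ x : ℕ)).card := by
    apply Finset.card_le_card_of_injOn (fun y => (ℓ y : ℕ))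
    · intro y hy
      simp only [past, Finset.coe_filter, Finset.mem_coe, Finset.mem_filter, Finset.mem_univ, true_and, Set.mem_setOf_eq] at hy
      simp only [Finset.mem_coe, Finset.mem_range]
      exact hℓ y x (lt_of_le_of_ne hy.1 hy.2)
    · intro a _ b _ h
      exact ℓ.injective (Fin.val_injective h)
  simpa using this

lemma numRels_eq_sum : numRels α = ∑ x : α, varpi x := by
  rw [numRels, Finset.card_eq_sum_card_fiberwise
    (f := Prod.snd) (t := Finset.univ) (fun z _ => Finset.mem_univ _)]
  refine Finset.sum_congr rfl fun x _ => ?_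
  have : Finset.filter (fun z : α × α => Prod.snd z = x)
      (Finset.filter (fun z : α × α => z.1 ≤ z.2 ∧ z.1 ≠ z.2) Finset.univ)
      = (past x).image (fun y => (y, x)) := by
    ext ⟨a, b⟩
    simp only [Finset.mem_filter, Finset.mem_univ, true_and, Finset.mem_image, past,
      Prod.mk.injEq]
    constructor
    · rintro ⟨⟨h1, h2⟩, rfl⟩
      exact ⟨a, ⟨h1, h2⟩, rfl, rfl⟩
    · rintro ⟨y, ⟨h1, h2⟩, rfl, rfl⟩
      exact ⟨⟨h1, h2⟩, rfl⟩
  rw [this, Finset.card_image_of_injective _ (fun a b h => (Prod.mk.injEq ..).mp h |>.1)]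
  rfl

lemma numLinks_eq_sum : numLinks α = ∑ x : α, mpast x := by
  rw [numLinks, Finset.card_eq_sum_card_fiberwise
    (f := Prod.snd) (t := Finset.univ) (fun z _ => Finset.mem_univ _)]
  refine Finset.sum_congr rfl fun x _ => ?_
  have : Finset.filter (fun z : α × α => Prod.snd z = x)
      (Finset.filter (fun z : α × α =>
        (z.1 ≤ z.2 ∧ z.1 ≠ z.2) ∧
          ∀ w, (z.1 ≤ w ∧ z.1 ≠ w) → (w ≤ z.2 ∧ w ≠ z.2) → False) Finset.univ)
      = ((past x).filter (fun y => ∀ z ∈ past x, y ≤ z → z ≤ y)).image (fun y => (y, x)) := by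
    ext ⟨a, b⟩
    simp only [Finset.mem_filter, Finset.mem_univ, true_and, Finset.mem_image, past,
      Prod.mk.injEq]
    constructor
    · rintro ⟨⟨⟨h1, h2⟩, h3⟩, rfl⟩
      refine ⟨a, ⟨⟨h1, h2⟩, ?_⟩, rfl, rfl⟩
      intro z hz hyz
      by_contra hzy
      have hne : a ≠ z := fun h => hzy (h ▸ le_refl a)
      exact h3 z ⟨hyz, hne⟩ hz
    · rintro ⟨y, ⟨⟨h1, h2⟩, h3⟩, rfl, rfl⟩
      refine ⟨⟨⟨h1, h2⟩, ?_⟩, rfl⟩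
      rintro w ⟨hyw, hyw'⟩ ⟨hwx, hwx'⟩
      have := h3 w (by simp [past, hwx, hwx']) hyw
      exact hyw' (le_antisymm hyw this)
  rw [this, Finset.card_image_of_injective _ (fun a b h => (Prod.mk.injEq ..).mp h |>.1)]
  rfl

omit [DecidableEq α] [DecidableRel ((· ≤ ·) : α → α → Prop)] in
lemma sum_ell (ℓ : α ≃ Fin (Fintype.card α)) :
    ∑ x : α, (ℓ x : ℕ) = (Fintype.card α).choose 2 := by
  rw [Nat.choose_two_right, ← Finset.sum_range_id]
  rw [← Fin.sum_univ_eq_sum_range (fun i => i) (Fintype.card α)]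
  exact Equiv.sum_comp ℓ (fun i : Fin (Fintype.card α) => (i : ℕ))

theorem stmt15 (p q : ℝ) (hp0 : 0 < p) (hp1 : p < 1) (hq : q = 1 - p)
    (ℓ : α ≃ Fin (Fintype.card α))
    (hℓ : ∀ x y : α, x < y → (ℓ x : ℕ) < (ℓ y : ℕ)) :
    ∏ x : α, p ^ mpast x * q ^ ((ℓ x : ℕ) - varpi x)
      = p ^ numLinks α * q ^ ((Fintype.card α).choose 2 - numRels α) := by
  rw [Finset.prod_mul_distrib, Finset.prod_pow_eq_pow_sum, Finset.prod_pow_eq_pow_sum,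
    ← numLinks_eq_sum]
  congr 1
  congr 1
  rw [Finset.sum_tsub_distrib Finset.univ (fun x _ => varpi_le ℓ hℓ x), sum_ell ℓ, numRels_eq_sum]
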